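/- The invariant representation reproduces all quantum statistics: for all d×d complex matrices ρ and E, (1/|G|)·Tr[$(ρ)·$(E)] = Tr[ρ·E], where the trace on the left is over ℓ²(G) ⊗ ℂ^d. Hence with ρ^inv = $(ρ)/|G| and E^inv = $(E), one has Tr[ρ^inv E^inv] = Tr[ρE], so a superselection rule for G imposes no fundamental restriction on achievable measurement statistics. -/

import Mathlib

/-!
STATEMENT 17: The invariant representation reproduces all quantum statistics: for all
d×d complex matrices ρ and E, (1/|G|)·Tr[$(ρ)·$(E)] = Tr[ρ·E].  Hence with
ρ^inv = $(ρ)/|G| and E^inv = $(E), one has Tr[ρ^inv E^inv] = Tr[ρE].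
-/

open Kronecker

/-- The map $(A) = ∑_{g∈G} |g⟩⟨g| ⊗ U(g) A U(g)† on ℓ²(G) ⊗ ℂ^d. -/
noncomputable def dollar {G : Type*} [Fintype G] [DecidableEq G] [Group G] (d : ℕ)
    (U : G →* ↥(Matrix.unitaryGroup (Fin d) ℂ)) (A : Matrix (Fin d) (Fin d) ℂ) :
    Matrix (G × Fin d) (G × Fin d) ℂ :=
  ∑ g : G, (Matrix.single g g (1 : ℂ)) ⊗ₖ
    ((U g : Matrix (Fin d) (Fin d) ℂ) * A * star (U g : Matrix (Fin d) (Fin d) ℂ))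

theorem dollar_reproduces_born_rule
    {G : Type*} [Fintype G] [DecidableEq G] [Group G] (d : ℕ)
    (U : G →* ↥(Matrix.unitaryGroup (Fin d) ℂ))
    (ρ E : Matrix (Fin d) (Fin d) ℂ) :
    ((Fintype.card G : ℂ))⁻¹ * Matrix.trace (dollar d U ρ * dollar d U E)
        = Matrix.trace (ρ * E)
    ∧ Matrix.trace ((((Fintype.card G : ℂ))⁻¹ • dollar d U ρ) * dollar d U E)
        = Matrix.trace (ρ * E) := by
  have hterm : ∀ g h : G,
      Matrix.trace (((Matrix.single g g (1 : ℂ)) ⊗ₖ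
        ((U g : Matrix (Fin d) (Fin d) ℂ) * ρ * star (U g : Matrix (Fin d) (Fin d) ℂ))) *
        ((Matrix.single h h (1 : ℂ)) ⊗ₖ
        ((U h : Matrix (Fin d) (Fin d) ℂ) * E * star (U h : Matrix (Fin d) (Fin d) ℂ))))
      = if g = h then Matrix.trace (ρ * E) else 0 := by
    intro g h
    rw [← Matrix.mul_kronecker_mul, Matrix.trace_kronecker]
    by_cases hgh : g = h
    · subst hgh
      simp only [if_pos rfl]
      rw [Matrix.single_mul_single_same, one_mul, Matrix.trace_single_eq_same, one_mul]
      have hu : star (U g : Matrix (Fin d) (Fin d) ℂ) * (U g : Matrix (Fin d) (Fin d) ℂ) = 1 :=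
        (U g).2.1
      have h1 : ((U g : Matrix (Fin d) (Fin d) ℂ) * ρ * star (U g : Matrix (Fin d) (Fin d) ℂ)) *
          ((U g : Matrix (Fin d) (Fin d) ℂ) * E * star (U g : Matrix (Fin d) (Fin d) ℂ))
          = (U g : Matrix (Fin d) (Fin d) ℂ) * (ρ * E) * star (U g : Matrix (Fin d) (Fin d) ℂ) := by
        simp only [mul_assoc]
        rw [← mul_assoc (star (U g : Matrix (Fin d) (Fin d) ℂ))
          (U g : Matrix (Fin d) (Fin d) ℂ), hu, one_mul]
      rw [h1, Matrix.trace_mul_cycle, ← mul_assoc, hu, one_mul]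
      simp
    · have h0 : Matrix.single g g (1 : ℂ) * Matrix.single h h (1 : ℂ) = 0 := by
        simp [hgh]
      rw [if_neg hgh, h0]
      simp
  have key : Matrix.trace (dollar d U ρ * dollar d U E)
      = (Fintype.card G : ℂ) * Matrix.trace (ρ * E) := by
    unfold dollar
    rw [Finset.sum_mul_sum, Matrix.trace_sum]
    simp_rw [Matrix.trace_sum, hterm]
    simp [Finset.sum_ite_eq, Finset.card_univ, mul_comm]
  have hcard : (Fintype.card G : ℂ) ≠ 0 := Nat.cast_ne_zero.mpr Fintype.card_ne_zero
  refine ⟨?_, ?_⟩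
  · rw [key, ← mul_assoc, inv_mul_cancel₀ hcard, one_mul]
  · rw [Matrix.smul_mul, Matrix.trace_smul, smul_eq_mul, key, ← mul_assoc,
      inv_mul_cancel₀ hcard, one_mul]
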